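/- Suppose generating series F_{g,m} indexed by genus g and divisibility m satisfy the multiple cover relation F_{g,m} = m^{deg - deg'} T_{m, 2g-2+deg'}(F_{g,1}) where T_{m,ℓ} = Σ_{ad=m} a^{ℓ-1} B_a U_d. If F_{g,1}(q) is the q-expansion of an element of (1/Δ)·QMod of weight 2g - 12 + deg', then F_{g,m} lies in (1/Δ^m)·QMod(m), i.e., it is a weakly holomorphic quasimodular form of level Γ_0(m) with pole of order at most m. -/

import Mathlib

open Complex UpperHalfPlane
open scoped ModularForm MatrixGroups Manifold Real

noncomputable section

/-- `B_a` on formal Laurent series `ℤ → ℂ`: `Σ aₙ qⁿ ↦ Σ aₙ q^{an}`. -/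
def Bop (a : ℕ) (f : ℤ → ℂ) : ℤ → ℂ :=
  fun n => if (a : ℤ) ∣ n then f (n / a) else 0

/-- `U_d` on formal Laurent series: `Σ aₙ qⁿ ↦ Σ a_{dn} qⁿ`. -/
def Uop (d : ℕ) (f : ℤ → ℂ) : ℤ → ℂ :=
  fun n => f (d * n)

/-- The Hecke-type operator `T_{m,ℓ} = Σ_{ad = m} a^{ℓ-1} B_a U_d`. -/
def Theck (m : ℕ) (ℓ : ℤ) (f : ℤ → ℂ) : ℤ → ℂ :=
  fun n => ∑ p ∈ Nat.divisorsAntidiagonal m, (p.1 : ℂ) ^ (ℓ - 1) * Bop p.1 (Uop p.2 f) n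

/-- `f` has `q`-expansion with coefficients `a : ℤ → ℂ`: `f(τ) = Σ_n aₙ e^{2πinτ}`. -/
def HasQExp (f : ℍ → ℂ) (a : ℤ → ℂ) : Prop :=
  ∀ τ : ℍ, HasSum (fun n : ℤ => a n * Complex.exp (2 * π * Complex.I * n * (τ : ℂ))) (f τ)

/-- `f` has a Fourier expansion at the cusp `i∞` with pole of order at most `m`. -/
def MeroPoleLE (m : ℤ) (f : ℍ → ℂ) : Prop :=
  ∃ a : ℤ → ℂ, (∀ n : ℤ, n < -m → a n = 0) ∧ HasQExp f a

/-- The associated almost holomorphic function `f̂ = Σ_{r=0}^p f_r y^{-r}`. -/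
def almostSum (p : ℕ) (fr : ℕ → ℍ → ℂ) : ℍ → ℂ :=
  fun τ => ∑ r ∈ Finset.range (p + 1), fr r τ * ((τ.im : ℂ))⁻¹ ^ r

/-- `f` is a weakly holomorphic quasimodular form of weight `k` for `Γ ≤ SL₂(ℤ)`
with pole of order at most `m` at the cusp. -/
def IsWeaklyQuasimodular (Γ : Subgroup (Matrix.SpecialLinearGroup (Fin 2) ℤ))
    (k m : ℤ) (f : ℍ → ℂ) : Prop :=
  ∃ (p : ℕ) (fr : ℕ → ℍ → ℂ),
    fr 0 = f ∧
    (∀ r ≤ p, MDifferentiable 𝓘(ℂ) 𝓘(ℂ) (fr r) ∧ MeroPoleLE m (fr r)) ∧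
    ∀ γ ∈ Γ, almostSum p fr ∣[k] γ = almostSum p fr

/-! ### Auxiliary constructions -/

/-- the point `(aτ + j)/d` of the upper half plane. -/
def phiH (a d : ℕ) (ha : 0 < a) (hd : 0 < d) (j : ℕ) (τ : ℍ) : ℍ :=
  ⟨((a : ℂ) * τ + (j : ℂ)) / (d : ℂ), by
    have h : ((((a : ℂ) * τ + (j : ℂ)) / (d : ℂ))).im = (a : ℝ) * τ.im / d := by
      rw [Complex.div_im]
      simp [Complex.add_im, Complex.mul_im, Complex.natCast_re, Complex.natCast_im]
      field_simp
    rw [h]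
    positivity⟩

lemma phiH_coe (a d : ℕ) (ha : 0 < a) (hd : 0 < d) (j : ℕ) (τ : ℍ) :
    (phiH a d ha hd j τ : ℂ) = ((a : ℂ) * τ + j) / d := rfl

lemma phiH_im (a d : ℕ) (ha : 0 < a) (hd : 0 < d) (j : ℕ) (τ : ℍ) :
    (phiH a d ha hd j τ).im = (a : ℝ) * τ.im / d := by
  have h : (phiH a d ha hd j τ).im = ((((a : ℂ) * τ + (j : ℂ)) / (d : ℂ))).im := rfl
  rw [h, Complex.div_im]
  simp [Complex.add_im, Complex.mul_im, Complex.natCast_re, Complex.natCast_im]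
  field_simp

lemma rootSum (d : ℕ) (hd : 0 < d) (n : ℤ) (hn : ¬ (d : ℤ) ∣ n) :
    ∑ j ∈ Finset.range d, Complex.exp (2 * π * Complex.I * n * j / d) = 0 := by
  set ζ : ℂ := Complex.exp (2 * π * Complex.I * n / d) with hζ
  have hne : ζ ≠ 1 := by
    intro h
    rw [hζ, Complex.exp_eq_one_iff] at h
    obtain ⟨k, hk⟩ := h
    apply hn
    refine ⟨k, ?_⟩
    have hd0 : (d : ℂ) ≠ 0 := Nat.cast_ne_zero.mpr hd.ne'
    have h2 : (2 : ℂ) * π * Complex.I ≠ 0 := by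
      simp [Real.pi_ne_zero, Complex.I_ne_zero]
    field_simp at hk
    have : (n : ℂ) = (d : ℂ) * k := by
      have := hk
      apply mul_left_cancel₀ h2
      ring_nf
      ring_nf at this
      linear_combination (2 * π * Complex.I) * this
    exact_mod_cast this
  have hterm : ∀ j ∈ Finset.range d, Complex.exp (2 * π * Complex.I * n * j / d) = ζ ^ j := by
    intro j _
    rw [hζ, ← Complex.exp_nat_mul]
    ring_nf
  rw [Finset.sum_congr rfl hterm, geom_sum_eq hne]
  have : ζ ^ d = 1 := by
    rw [hζ, ← Complex.exp_nat_mul]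
    have hd0 : (d : ℂ) ≠ 0 := Nat.cast_ne_zero.mpr hd.ne'
    have : (d : ℂ) * (2 * π * Complex.I * n / d) = n * (2 * π * Complex.I) := by
      field_simp
    rw [this, Complex.exp_int_mul_two_pi_mul_I]
  rw [this]
  simp

lemma qexp_avg (a d : ℕ) (ha : 0 < a) (hd : 0 < d) (f : ℍ → ℂ) (F : ℤ → ℂ)
    (hf : HasQExp f F) :
    HasQExp (fun τ => (d : ℂ)⁻¹ * ∑ j ∈ Finset.range d, f (phiH a d ha hd j τ))
      (Bop a (Uop d F)) := by
  intro τ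
  have hd0 : (d : ℂ) ≠ 0 := Nat.cast_ne_zero.mpr hd.ne'
  set G : ℤ → ℂ := fun n => (d : ℂ)⁻¹ *
    ∑ j ∈ Finset.range d, F n * Complex.exp (2 * π * Complex.I * n * (phiH a d ha hd j τ : ℂ))
    with hG
  have hGsum : HasSum G ((d : ℂ)⁻¹ * ∑ j ∈ Finset.range d, f (phiH a d ha hd j τ)) := by
    refine HasSum.mul_left _ ?_
    exact hasSum_sum (fun j _ => hf (phiH a d ha hd j τ))
  have hGvan : ∀ n : ℤ, ¬ (d : ℤ) ∣ n → G n = 0 := by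
    intro n hn
    rw [hG]
    simp only
    have : ∀ j ∈ Finset.range d,
        F n * Complex.exp (2 * π * Complex.I * n * (phiH a d ha hd j τ : ℂ)) =
        (F n * Complex.exp (2 * π * Complex.I * n * a * τ / d)) *
          Complex.exp (2 * π * Complex.I * n * j / d) := by
      intro j _
      have hx : Complex.exp (2 * π * Complex.I * n * (phiH a d ha hd j τ : ℂ)) =
          Complex.exp (2 * π * Complex.I * n * a * τ / d) *
            Complex.exp (2 * π * Complex.I * n * j / d) := by
        rw [← Complex.exp_add]
        congr 1
        rw [phiH_coe]
        field_simp
      rw [hx]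
      ring
    rw [Finset.sum_congr rfl this, ← Finset.mul_sum, rootSum d hd n hn]
    simp
  have hGval : ∀ k : ℤ, G (d * k) =
      F (d * k) * Complex.exp (2 * π * Complex.I * ((a : ℤ) * k : ℤ) * (τ : ℂ)) := by
    intro k
    rw [hG]
    simp only
    have : ∀ j ∈ Finset.range d,
        F (d * k) * Complex.exp (2 * π * Complex.I * ((d : ℤ) * k : ℤ) * (phiH a d ha hd j τ : ℂ)) =
        F (d * k) * Complex.exp (2 * π * Complex.I * ((a : ℤ) * k : ℤ) * (τ : ℂ)) := by
      intro j _
      congr 1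
      rw [phiH_coe]
      have : (2 : ℂ) * π * Complex.I * ((d : ℤ) * k : ℤ) * (((a : ℂ) * τ + j) / d) =
          2 * π * Complex.I * ((a : ℤ) * k : ℤ) * (τ : ℂ) + (k * j : ℤ) * (2 * π * Complex.I) := by
        push_cast
        field_simp
      rw [this, Complex.exp_add, Complex.exp_int_mul_two_pi_mul_I, mul_one]
    rw [Finset.sum_congr rfl this, Finset.sum_const, Finset.card_range, nsmul_eq_mul]
    rw [← mul_assoc, inv_mul_cancel₀ hd0, one_mul]
  have hinj_d : Function.Injective (fun k : ℤ => (d : ℤ) * k) :=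
    fun x y h => by
      have : (d : ℤ) ≠ 0 := Int.natCast_ne_zero.mpr hd.ne'
      exact mul_left_cancel₀ this h
  have hinj_a : Function.Injective (fun k : ℤ => (a : ℤ) * k) :=
    fun x y h => by
      have : (a : ℤ) ≠ 0 := Int.natCast_ne_zero.mpr ha.ne'
      exact mul_left_cancel₀ this h
  have h1 : HasSum (G ∘ fun k : ℤ => (d : ℤ) * k)
      ((d : ℂ)⁻¹ * ∑ j ∈ Finset.range d, f (phiH a d ha hd j τ)) := by
    rw [Function.Injective.hasSum_iff hinj_d]
    · exact hGsum
    · intro n hn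
      apply hGvan
      intro ⟨k, hk⟩
      exact hn ⟨k, by simpa using hk.symm⟩
  set T : ℤ → ℂ := fun n => Bop a (Uop d F) n * Complex.exp (2 * π * Complex.I * n * (τ : ℂ))
    with hT
  have hTG : ∀ k : ℤ, T ((a : ℤ) * k) = G ((d : ℤ) * k) := by
    intro k
    rw [hT, hGval]
    simp only
    have hdvd : (a : ℤ) ∣ (a : ℤ) * k := ⟨k, rfl⟩
    rw [Bop]
    simp only [hdvd, if_true]
    rw [Uop]
    have : ((a : ℤ) * k) / (a : ℤ) = k := Int.mul_ediv_cancel_left _ (Int.natCast_ne_zero.mpr ha.ne')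
    rw [this]
  have hvan : ∀ n ∉ Set.range (fun k : ℤ => (a : ℤ) * k), T n = 0 := by
    intro n hn
    rw [hT]
    simp only
    rw [Bop]
    have : ¬ (a : ℤ) ∣ n := fun ⟨k, hk⟩ => hn ⟨k, hk.symm⟩
    simp [this]
  have h3 : (T ∘ fun k : ℤ => (a : ℤ) * k) = (G ∘ fun k : ℤ => (d : ℤ) * k) :=
    funext fun k => hTG k
  exact (hinj_a.hasSum_iff hvan).mp (by rw [h3]; exact h1)

lemma smul_coe_int (γ : SL(2,ℤ)) (z : ℍ) :
    ((γ • z : ℍ) : ℂ) = ((γ 0 0 : ℂ) * z + γ 0 1) / ((γ 1 0 : ℂ) * z + γ 1 1) := by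
  rw [UpperHalfPlane.specialLinearGroup_apply]
  simp only [UpperHalfPlane.coe_mk]
  norm_num

lemma moebius_term (a d : ℕ) (ha : 0 < a) (hd : 0 < d) (γ : SL(2,ℤ)) (c₀ : ℤ)
    (hc : (γ 1 0 : ℤ) = a * d * c₀) (j j' : ℕ)
    (hcong : (d : ℤ) ∣ ((a : ℤ) * γ 0 1 + j * γ 1 1 - (γ 0 0 + j * d * c₀) * j'))
    (τ : ℍ) :
    ∃ γ' : SL(2,ℤ),
      phiH a d ha hd j (γ • τ) = γ' • phiH a d ha hd j' τ ∧
      denom γ' (phiH a d ha hd j' τ) = denom γ τ := by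
  obtain ⟨B, hB⟩ := hcong
  have hdet : (γ 0 0 : ℤ) * γ 1 1 - γ 0 1 * γ 1 0 = 1 := by
    have := γ.prop
    rw [Matrix.det_fin_two] at this
    exact_mod_cast this
  set γ' : SL(2,ℤ) := ⟨!![γ 0 0 + j * d * c₀, B; d^2*c₀, γ 1 1 - d * c₀ * j'], by
      rw [Matrix.det_fin_two_of]
      linear_combination hdet + (d * c₀) * hB + γ 0 1 * hc⟩ with hγ'
  have hτd : ((γ 1 0 : ℂ) * τ + γ 1 1) ≠ 0 := by
    rw [← ModularGroup.denom_apply]; exact denom_ne_zero _ _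
  have hd0 : (d : ℂ) ≠ 0 := Nat.cast_ne_zero.mpr hd.ne'
  have hBC : (d : ℂ) * B = (a : ℂ) * γ 0 1 + j * γ 1 1 - ((γ 0 0 : ℂ) + j * d * c₀) * j' := by
    exact_mod_cast hB.symm
  have hcC : ((γ 1 0 : ℤ) : ℂ) = (a : ℂ) * d * c₀ := by exact_mod_cast hc
  have e00 : (γ' 0 0 : ℤ) = γ 0 0 + j * d * c₀ := by rw [hγ']; rfl
  have e01 : (γ' 0 1 : ℤ) = B := by rw [hγ']; rfl
  have e10 : (γ' 1 0 : ℤ) = d^2*c₀ := by rw [hγ']; rfl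
  have e11 : (γ' 1 1 : ℤ) = γ 1 1 - d * c₀ * j' := by rw [hγ']; rfl
  have hden' : denom γ' (phiH a d ha hd j' τ) = denom γ τ := by
    rw [ModularGroup.denom_apply, ModularGroup.denom_apply, phiH_coe, e10, e11]
    push_cast
    rw [hcC]
    field_simp
    ring
  refine ⟨γ', ?_, hden'⟩
  apply UpperHalfPlane.ext
  rw [phiH_coe, smul_coe_int, smul_coe_int, phiH_coe, e00, e01, e10, e11]
  have hden2 : ((((d:ℤ)^2*c₀ : ℤ) : ℂ) * (((a : ℂ) * τ + j') / d) +
      (((γ 1 1 : ℤ) - d * c₀ * j' : ℤ) : ℂ)) ≠ 0 := by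
    have := denom_ne_zero γ' (phiH a d ha hd j' τ)
    rw [ModularGroup.denom_apply, phiH_coe, e10, e11] at this
    exact_mod_cast this
  push_cast
  push_cast at hden2
  have hBval : (B : ℂ) = ((a : ℂ) * γ 0 1 + j * γ 1 1 - ((γ 0 0 : ℂ) + j * d * c₀) * j') / d := by
    rw [eq_div_iff hd0]; linear_combination hBC
  rw [hcC, hBval]
  rw [hcC] at hτd
  rw [div_eq_div_iff hd0 hden2]
  have hτd' : (a : ℂ) * τ * d * c₀ + ((γ 1 1 : ℤ) : ℂ) ≠ 0 := by convert hτd using 1; ring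
  field_simp
  ring

def sig (a d : ℕ) (γ : SL(2,ℤ)) (j : ℕ) : ℕ :=
  (((a : ℤ) * γ 0 1 * γ 1 1 + γ 1 1 ^ 2 * j) % d).toNat

def sigInv (a d : ℕ) (γ : SL(2,ℤ)) (j' : ℕ) : ℕ :=
  ((γ 0 0 ^ 2 * ((j' : ℤ) - (a : ℤ) * γ 0 1 * γ 1 1)) % d).toNat

lemma sig_lt (a d : ℕ) (hd : 0 < d) (γ : SL(2,ℤ)) (j : ℕ) : sig a d γ j < d := by
  have h1 : ((a : ℤ) * γ 0 1 * γ 1 1 + γ 1 1 ^ 2 * j) % d < d :=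
    Int.emod_lt_of_pos _ (by exact_mod_cast hd)
  have h2 : 0 ≤ ((a : ℤ) * γ 0 1 * γ 1 1 + γ 1 1 ^ 2 * j) % d :=
    Int.emod_nonneg _ (by exact_mod_cast hd.ne')
  unfold sig; omega

lemma sigInv_lt (a d : ℕ) (hd : 0 < d) (γ : SL(2,ℤ)) (j' : ℕ) : sigInv a d γ j' < d := by
  have h1 : (γ 0 0 ^ 2 * ((j' : ℤ) - (a : ℤ) * γ 0 1 * γ 1 1)) % d < d :=
    Int.emod_lt_of_pos _ (by exact_mod_cast hd)
  have h2 : 0 ≤ (γ 0 0 ^ 2 * ((j' : ℤ) - (a : ℤ) * γ 0 1 * γ 1 1)) % d :=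
    Int.emod_nonneg _ (by exact_mod_cast hd.ne')
  unfold sigInv; omega

lemma sig_coe (a d : ℕ) (hd : 0 < d) (γ : SL(2,ℤ)) (j : ℕ) :
    ((sig a d γ j : ℕ) : ℤ) = ((a : ℤ) * γ 0 1 * γ 1 1 + γ 1 1 ^ 2 * j) % d := by
  unfold sig
  exact Int.toNat_of_nonneg (Int.emod_nonneg _ (by exact_mod_cast hd.ne'))

lemma sigInv_coe (a d : ℕ) (hd : 0 < d) (γ : SL(2,ℤ)) (j' : ℕ) :
    ((sigInv a d γ j' : ℕ) : ℤ) = (γ 0 0 ^ 2 * ((j' : ℤ) - (a : ℤ) * γ 0 1 * γ 1 1)) % d := by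
  unfold sigInv
  exact Int.toNat_of_nonneg (Int.emod_nonneg _ (by exact_mod_cast hd.ne'))

lemma sig_cast (a d : ℕ) (hd : 0 < d) (γ : SL(2,ℤ)) (j : ℕ) :
    ((sig a d γ j : ℕ) : ZMod d) = (((a : ℤ) * γ 0 1 * γ 1 1 + γ 1 1 ^ 2 * j : ℤ) : ZMod d) := by
  have : ((sig a d γ j : ℕ) : ZMod d) = (((sig a d γ j : ℕ) : ℤ) : ZMod d) := by push_cast; ring
  rw [this, sig_coe a d hd, ZMod.intCast_mod]

lemma sigInv_cast (a d : ℕ) (hd : 0 < d) (γ : SL(2,ℤ)) (j' : ℕ) :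
    ((sigInv a d γ j' : ℕ) : ZMod d) =
      ((γ 0 0 ^ 2 * ((j' : ℤ) - (a : ℤ) * γ 0 1 * γ 1 1) : ℤ) : ZMod d) := by
  have : ((sigInv a d γ j' : ℕ) : ZMod d) = (((sigInv a d γ j' : ℕ) : ℤ) : ZMod d) := by
    push_cast; ring
  rw [this, sigInv_coe a d hd, ZMod.intCast_mod]

lemma unit_mod (d : ℕ) (γ : SL(2,ℤ)) (hdvd : (d : ℤ) ∣ γ 1 0) :
    ((γ 0 0 : ℤ) : ZMod d) * ((γ 1 1 : ℤ) : ZMod d) = 1 := by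
  have hdet : (γ 0 0 : ℤ) * γ 1 1 - γ 0 1 * γ 1 0 = 1 := by
    have := γ.prop
    rw [Matrix.det_fin_two] at this
    exact_mod_cast this
  have hc0 : ((γ 1 0 : ℤ) : ZMod d) = 0 := (ZMod.intCast_zmod_eq_zero_iff_dvd _ _).mpr hdvd
  have := congrArg (fun x : ℤ => (x : ZMod d)) hdet
  push_cast at this
  rw [hc0] at this
  linear_combination this

lemma nat_eq_of_zmod_eq (d : ℕ) (x y : ℕ) (hx : x < d) (hy : y < d)
    (h : (x : ZMod d) = (y : ZMod d)) : x = y := by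
  have hd : 0 < d := by omega
  haveI : NeZero d := ⟨hd.ne'⟩
  have := (ZMod.natCast_eq_natCast_iff' x y d).mp h
  rwa [Nat.mod_eq_of_lt hx, Nat.mod_eq_of_lt hy] at this

lemma sig_left_inv (a d : ℕ) (hd : 0 < d) (γ : SL(2,ℤ)) (hdvd : (d : ℤ) ∣ γ 1 0)
    (j : ℕ) (hj : j < d) : sigInv a d γ (sig a d γ j) = j := by
  apply nat_eq_of_zmod_eq d _ _ (sigInv_lt a d hd γ _) hj
  rw [sigInv_cast a d hd]
  have hu := unit_mod d γ hdvd
  push_cast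
  rw [sig_cast a d hd]
  push_cast
  set A := ((γ 0 0 : ℤ) : ZMod d)
  set B := ((γ 0 1 : ℤ) : ZMod d)
  set D := ((γ 1 1 : ℤ) : ZMod d)
  linear_combination (A * D + 1) * (j : ZMod d) * hu

lemma sig_right_inv (a d : ℕ) (hd : 0 < d) (γ : SL(2,ℤ)) (hdvd : (d : ℤ) ∣ γ 1 0)
    (j' : ℕ) (hj : j' < d) : sig a d γ (sigInv a d γ j') = j' := by
  apply nat_eq_of_zmod_eq d _ _ (sig_lt a d hd γ _) hj
  rw [sig_cast a d hd]
  have hu := unit_mod d γ hdvd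
  push_cast
  rw [sigInv_cast a d hd]
  push_cast
  set A := ((γ 0 0 : ℤ) : ZMod d)
  set B := ((γ 0 1 : ℤ) : ZMod d)
  set D := ((γ 1 1 : ℤ) : ZMod d)
  linear_combination (D * A + 1) * (((j' : ZMod d) - (a : ZMod d) * B * D)) * hu

lemma sig_cong (a d : ℕ) (hd : 0 < d) (γ : SL(2,ℤ)) (c₀ : ℤ)
    (hc : (γ 1 0 : ℤ) = a * d * c₀) (j : ℕ) :
    (d : ℤ) ∣ ((a : ℤ) * γ 0 1 + j * γ 1 1 - (γ 0 0 + j * d * c₀) * (sig a d γ j)) := by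
  have hdvd : (d : ℤ) ∣ γ 1 0 := by rw [hc]; exact ⟨(a : ℤ) * c₀, by ring⟩
  have hu := unit_mod d γ hdvd
  rw [← ZMod.intCast_zmod_eq_zero_iff_dvd]
  push_cast
  rw [sig_cast a d hd]
  push_cast
  have hd0 : ((d : ℕ) : ZMod d) = 0 := ZMod.natCast_self d
  rw [hd0]
  set A := ((γ 0 0 : ℤ) : ZMod d)
  set B := ((γ 0 1 : ℤ) : ZMod d)
  set D := ((γ 1 1 : ℤ) : ZMod d)
  linear_combination (-( (a : ZMod d) * B + (j : ZMod d) * D)) * hu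

lemma avg_invariance (a d : ℕ) (ha : 0 < a) (hd : 0 < d) (k : ℤ) (Fh : ℍ → ℂ)
    (hFh : ∀ (γ' : SL(2,ℤ)) (z : ℍ), Fh (γ' • z) = denom γ' z ^ k * Fh z)
    (γ : SL(2,ℤ)) (hγc : ((a * d : ℕ) : ℤ) ∣ γ 1 0) (τ : ℍ) :
    ∑ j ∈ Finset.range d, Fh (phiH a d ha hd j (γ • τ)) =
      denom γ τ ^ k * ∑ j ∈ Finset.range d, Fh (phiH a d ha hd j τ) := by
  obtain ⟨c₀, hc⟩ := hγc
  have hc' : (γ 1 0 : ℤ) = a * d * c₀ := by push_cast at hc; exact_mod_cast hc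
  have hdvd : (d : ℤ) ∣ γ 1 0 := ⟨a * c₀, by rw [hc']; ring⟩
  have step : ∀ j ∈ Finset.range d, Fh (phiH a d ha hd j (γ • τ)) =
      denom γ τ ^ k * Fh (phiH a d ha hd (sig a d γ j) τ) := by
    intro j _
    obtain ⟨γ', hmoeb, hden⟩ :=
      moebius_term a d ha hd γ c₀ hc' j (sig a d γ j) (sig_cong a d hd γ c₀ hc' j) τ
    rw [hmoeb, hFh γ' _, hden]
  rw [Finset.sum_congr rfl step, ← Finset.mul_sum]
  congr 1
  exact Finset.sum_nbij' (sig a d γ) (sigInv a d γ)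
    (fun j _ => Finset.mem_range.mpr (sig_lt a d hd γ j))
    (fun j _ => Finset.mem_range.mpr (sigInv_lt a d hd γ j))
    (fun j hj => sig_left_inv a d hd γ hdvd j (Finset.mem_range.mp hj))
    (fun j hj => sig_right_inv a d hd γ hdvd j (Finset.mem_range.mp hj))
    (fun j _ => rfl)

lemma phiC_im (a d : ℕ) (hd : 0 < d) (j : ℕ) (z : ℂ) :
    (((a : ℂ) * z + j) / d).im = a * z.im / d := by
  rw [Complex.div_im]
  simp [Complex.add_im, Complex.mul_im, Complex.natCast_re, Complex.natCast_im]
  have hd0 : (d : ℝ) ≠ 0 := Nat.cast_ne_zero.mpr hd.ne'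
  field_simp

lemma mdiff_comp (a d : ℕ) (ha : 0 < a) (hd : 0 < d) (j : ℕ) (f : ℍ → ℂ)
    (hf : MDifferentiable 𝓘(ℂ) 𝓘(ℂ) f) :
    MDifferentiable 𝓘(ℂ) 𝓘(ℂ) (fun τ => f (phiH a d ha hd j τ)) := by
  rw [UpperHalfPlane.mdifferentiable_iff] at hf ⊢
  have hmap : Set.MapsTo (fun z : ℂ => ((a : ℂ) * z + j) / d)
      {z : ℂ | 0 < z.im} {z : ℂ | 0 < z.im} := by
    intro z hz
    simp only [Set.mem_setOf_eq] at hz ⊢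
    rw [phiC_im a d hd]
    positivity
  have hdiff : Differentiable ℂ (fun z : ℂ => ((a : ℂ) * z + j) / d) :=
    ((differentiable_id.const_mul _).add_const _).div_const _
  have hcomp := hf.comp hdiff.differentiableOn hmap
  refine hcomp.congr ?_
  intro z hz
  simp only [Set.mem_setOf_eq] at hz
  have hz' : 0 < (((a : ℂ) * z + j) / d).im := by rw [phiC_im a d hd]; positivity
  simp only [Function.comp_apply]
  rw [ofComplex_apply_of_im_pos hz, ofComplex_apply_of_im_pos hz']
  rfl

/-- the smoothed average `d⁻¹ Σ_j f((aτ+j)/d)`, total in `a`, `d`. -/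
def avgF (a d : ℕ) (f : ℍ → ℂ) : ℍ → ℂ :=
  fun τ => if h : 0 < a ∧ 0 < d then
    (d : ℂ)⁻¹ * ∑ j ∈ Finset.range d, f (phiH a d h.1 h.2 j τ) else 0

lemma avgF_eq (a d : ℕ) (ha : 0 < a) (hd : 0 < d) (f : ℍ → ℂ) :
    avgF a d f = fun τ => (d : ℂ)⁻¹ * ∑ j ∈ Finset.range d, f (phiH a d ha hd j τ) := by
  funext τ
  rw [avgF, dif_pos ⟨ha, hd⟩]

lemma mdiff_sum {ι : Type*} (S : Finset ι) (f : ι → ℍ → ℂ)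
    (h : ∀ i ∈ S, MDifferentiable 𝓘(ℂ) 𝓘(ℂ) (f i)) :
    MDifferentiable 𝓘(ℂ) 𝓘(ℂ) (fun τ => ∑ i ∈ S, f i τ) := by
  classical
  induction S using Finset.induction with
  | empty => simpa using mdifferentiable_const
  | insert x s hx ih =>
    simp only [Finset.sum_insert hx]
    exact (h x (Finset.mem_insert_self x s)).add
      (ih (fun i hi => h i (Finset.mem_insert_of_mem hi)))

lemma hasQExp_comb {ι : Type*} (S : Finset ι) (c : ι → ℂ) (fs : ι → ℍ → ℂ) (Fs : ι → ℤ → ℂ)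
    (h : ∀ i ∈ S, HasQExp (fs i) (Fs i)) :
    HasQExp (fun τ => ∑ i ∈ S, c i * fs i τ) (fun n => ∑ i ∈ S, c i * Fs i n) := by
  intro τ
  have hs := hasSum_sum (f := fun i (n : ℤ) =>
      c i * (Fs i n * Complex.exp (2 * π * Complex.I * n * (τ : ℂ))))
    (fun i hi => ((h i hi) τ).mul_left (c i))
  have h2 : (fun n : ℤ => (∑ i ∈ S, c i * Fs i n) *
      Complex.exp (2 * π * Complex.I * n * (τ : ℂ))) =
      fun n : ℤ => ∑ i ∈ S, c i * (Fs i n * Complex.exp (2 * π * Complex.I * n * (τ : ℂ))) := by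
    funext n
    rw [Finset.sum_mul]
    exact Finset.sum_congr rfl (fun i _ => mul_assoc _ _ _)
  rw [h2]
  exact hs

/-- Suppose the generating series satisfy the multiple cover relation
`F_{g,m} = m^{deg - deg'} T_{m, 2g-2+deg'}(F_{g,1})`. If `F_{g,1}` is the
`q`-expansion of an element of `(1/Δ)·QMod` of weight `2g - 12 + deg'` (a weakly
holomorphic quasimodular form for `SL₂(ℤ)` with pole of order at most `1`), then
`F_{g,m}` lies in `(1/Δ^m)·QMod(m)`: it is the `q`-expansion of a weakly
holomorphic quasimodular form of weight `2g - 12 + deg'` for `Γ₀(m)` with pole of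
order at most `m`. -/
theorem multiple_cover_quasimodularity (m : ℕ) (hm : 0 < m) (g : ℕ) (dg dg' : ℤ)
    (F1 : ℤ → ℂ) (f1 : ℍ → ℂ)
    (h1 : IsWeaklyQuasimodular ⊤ (2 * g - 12 + dg') 1 f1)
    (h2 : HasQExp f1 F1) :
    ∃ fm : ℍ → ℂ,
      IsWeaklyQuasimodular (CongruenceSubgroup.Gamma0 m) (2 * g - 12 + dg') m fm ∧
      HasQExp fm (fun n => (m : ℂ) ^ (dg - dg') * Theck m (2 * g - 2 + dg') F1 n) := by
  obtain ⟨p, fr, hfr0, hreg, hinv⟩ := h1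
  set k : ℤ := 2 * g - 12 + dg' with hk
  set ℓ : ℤ := 2 * g - 2 + dg' with hℓ
  set C : ℂ := (m : ℂ) ^ (dg - dg') with hC
  set S := Nat.divisorsAntidiagonal m with hS
  have hq : ∀ q ∈ S, 0 < q.1 ∧ 0 < q.2 ∧ q.1 * q.2 = m := by
    intro q hqq
    rw [hS, Nat.mem_divisorsAntidiagonal] at hqq
    obtain ⟨hmul, hne⟩ := hqq
    have h1' : q.1 ≠ 0 := by rintro h; rw [h, zero_mul] at hmul; exact hne hmul.symm
    have h2' : q.2 ≠ 0 := by rintro h; rw [h, mul_zero] at hmul; exact hne hmul.symm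
    exact ⟨Nat.pos_of_ne_zero h1', Nat.pos_of_ne_zero h2', hmul⟩
  set c : ℕ → ℕ × ℕ → ℂ := fun r q => C * (q.1 : ℂ) ^ (ℓ - 1) * ((q.2 : ℂ) / (q.1 : ℂ)) ^ r
    with hc
  set fr' : ℕ → ℍ → ℂ := fun r τ => ∑ q ∈ S, c r q * avgF q.1 q.2 (fr r) τ with hfr'
  set Fh : ℍ → ℂ := almostSum p fr with hFh
  have hFhinv : ∀ (γ' : SL(2,ℤ)) (z : ℍ), Fh (γ' • z) = denom γ' z ^ k * Fh z := by
    intro γ' z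
    have h := hinv γ' (Subgroup.mem_top γ')
    have h2' := (ModularForm.slash_action_eq'_iff k Fh γ' z).mp (by rw [h])
    rw [h2', ← ModularGroup.denom_apply]
  have hcollapse : ∀ τ : ℍ, almostSum p fr' τ =
      ∑ q ∈ S, (C * (q.1 : ℂ) ^ (ℓ - 1)) * avgF q.1 q.2 Fh τ := by
    intro τ
    rw [almostSum]
    have hswap : ∑ r ∈ Finset.range (p + 1), fr' r τ * ((τ.im : ℂ))⁻¹ ^ r =
        ∑ q ∈ S, ∑ r ∈ Finset.range (p + 1),
          c r q * avgF q.1 q.2 (fr r) τ * ((τ.im : ℂ))⁻¹ ^ r := by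
      rw [Finset.sum_comm]
      refine Finset.sum_congr rfl (fun r _ => ?_)
      simp only [hfr']
      rw [Finset.sum_mul]
    rw [hswap]
    refine Finset.sum_congr rfl (fun q hqq => ?_)
    obtain ⟨ha, hd, hm'⟩ := hq q hqq
    have hd0 : ((q.2 : ℂ)) ≠ 0 := Nat.cast_ne_zero.mpr hd.ne'
    have ha0 : ((q.1 : ℂ)) ≠ 0 := Nat.cast_ne_zero.mpr ha.ne'
    have him0 : ((τ.im : ℂ)) ≠ 0 := by
      simpa using Complex.ofReal_ne_zero.mpr (ne_of_gt τ.im_pos)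
    have him : ∀ j : ℕ, (((phiH q.1 q.2 ha hd j τ).im : ℂ))⁻¹ =
        ((q.2 : ℂ) / (q.1 : ℂ)) * ((τ.im : ℂ))⁻¹ := by
      intro j
      rw [phiH_im]
      push_cast
      field_simp
    simp only [avgF_eq q.1 q.2 ha hd]
    have hFhφ : ∀ j : ℕ, Fh (phiH q.1 q.2 ha hd j τ) =
        ∑ r ∈ Finset.range (p + 1), fr r (phiH q.1 q.2 ha hd j τ) *
          (((q.2 : ℂ) / (q.1 : ℂ)) * ((τ.im : ℂ))⁻¹) ^ r := by
      intro j
      rw [hFh, almostSum]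
      exact Finset.sum_congr rfl (fun r _ => by rw [him j])
    rw [Finset.sum_congr rfl (fun j (_ : j ∈ Finset.range q.2) => hFhφ j)]
    simp only [Finset.mul_sum, Finset.sum_mul]
    rw [Finset.sum_comm]
    refine Finset.sum_congr rfl (fun j _ => ?_)
    refine Finset.sum_congr rfl (fun r _ => ?_)
    simp only [hc]
    rw [mul_pow]
    ring
  have hq1q2 : ∀ q ∈ S, ((q.1 * q.2 : ℕ) : ℤ) = (m : ℤ) := by
    intro q hqq; exact_mod_cast congrArg (Nat.cast : ℕ → ℤ) (hq q hqq).2.2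
  refine ⟨fr' 0, ⟨p, fr', rfl, ?_, ?_⟩, ?_⟩
  · -- differentiability and poles
    intro r hr
    obtain ⟨hdiffr, hmero⟩ := hreg r hr
    obtain ⟨ar, hvanr, hqexpr⟩ := hmero
    constructor
    · simp only [hfr']
      refine mdiff_sum S _ (fun q hqq => ?_)
      obtain ⟨ha, hd, _⟩ := hq q hqq
      have hbase : MDifferentiable 𝓘(ℂ) 𝓘(ℂ) (avgF q.1 q.2 (fr r)) := by
        rw [avgF_eq q.1 q.2 ha hd]
        have := mdiff_sum (Finset.range q.2)
          (fun j τ => fr r (phiH q.1 q.2 ha hd j τ))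
          (fun j _ => mdiff_comp q.1 q.2 ha hd j (fr r) hdiffr)
        simpa [smul_eq_mul, Pi.smul_def] using this.const_smul ((q.2 : ℂ)⁻¹)
      simpa [smul_eq_mul, Pi.smul_def] using hbase.const_smul (c r q)
    · refine ⟨fun n => ∑ q ∈ S, c r q * Bop q.1 (Uop q.2 ar) n, ?_, ?_⟩
      · intro n hn
        refine Finset.sum_eq_zero (fun q hqq => ?_)
        obtain ⟨ha, hd, hm'⟩ := hq q hqq
        have hB : Bop q.1 (Uop q.2 ar) n = 0 := by
          rw [Bop]
          split_ifs with hdvd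
          · rw [Uop]
            apply hvanr
            obtain ⟨t, ht⟩ := hdvd
            have htn : n / (q.1 : ℤ) = t := by
              rw [ht]; exact Int.mul_ediv_cancel_left _ (Int.natCast_ne_zero.mpr ha.ne')
            rw [htn]
            have ha' : (0 : ℤ) < (q.1 : ℤ) := by exact_mod_cast ha
            have hd' : (0 : ℤ) < (q.2 : ℤ) := by exact_mod_cast hd
            have hmz : ((m : ℕ) : ℤ) = (q.1 : ℤ) * q.2 := by exact_mod_cast hm'.symm
            have hlt : (q.1 : ℤ) * t < -((q.1 : ℤ) * q.2) := by
              rw [← ht, ← hmz]; exact_mod_cast hn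
            have ht2 : t < -(q.2 : ℤ) := by nlinarith
            nlinarith
          · rfl
        rw [hB, mul_zero]
      · have := hasQExp_comb S (c r) (fun q => avgF q.1 q.2 (fr r))
          (fun q => Bop q.1 (Uop q.2 ar)) (fun q hqq => by
            obtain ⟨ha, hd, _⟩ := hq q hqq
            show HasQExp (avgF q.1 q.2 (fr r)) (Bop q.1 (Uop q.2 ar))
            rw [avgF_eq q.1 q.2 ha hd]
            exact qexp_avg q.1 q.2 ha hd (fr r) ar hqexpr)
        exact this
  · -- invariance under Γ₀(m)
    intro γ hγ
    have hγc : ((m : ℕ) : ℤ) ∣ γ 1 0 := by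
      have := CongruenceSubgroup.Gamma0_mem.mp hγ
      exact_mod_cast (ZMod.intCast_zmod_eq_zero_iff_dvd _ m).mp this
    funext z
    rw [ModularForm.slash_action_eq'_iff]
    have hA1 := hcollapse (γ • z)
    have hA2 := hcollapse z
    rw [hA1, hA2]
    have hstep : ∀ q ∈ S, (C * (q.1 : ℂ) ^ (ℓ - 1)) * avgF q.1 q.2 Fh (γ • z) =
        denom γ z ^ k * ((C * (q.1 : ℂ) ^ (ℓ - 1)) * avgF q.1 q.2 Fh z) := by
      intro q hqq
      obtain ⟨ha, hd, hm'⟩ := hq q hqq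
      have hγc' : ((q.1 * q.2 : ℕ) : ℤ) ∣ γ 1 0 := by rw [hq1q2 q hqq]; exact hγc
      have hinv' := avg_invariance q.1 q.2 ha hd k Fh hFhinv γ hγc' z
      simp only [avgF_eq q.1 q.2 ha hd]
      rw [hinv']
      ring
    rw [Finset.sum_congr rfl hstep, ← Finset.mul_sum, ← ModularGroup.denom_apply]
  · -- the q-expansion
    have hcomb := hasQExp_comb S (c 0) (fun q => avgF q.1 q.2 (fr 0))
      (fun q => Bop q.1 (Uop q.2 F1)) (fun q hqq => by
        obtain ⟨ha, hd, _⟩ := hq q hqq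
        show HasQExp (avgF q.1 q.2 (fr 0)) (Bop q.1 (Uop q.2 F1))
        rw [avgF_eq q.1 q.2 ha hd, hfr0]
        exact qexp_avg q.1 q.2 ha hd f1 F1 h2)
    have hcoeff : (fun n : ℤ => ∑ q ∈ S, c 0 q * Bop q.1 (Uop q.2 F1) n) =
        (fun n : ℤ => (m : ℂ) ^ (dg - dg') * Theck m ℓ F1 n) := by
      funext n
      rw [Theck, Finset.mul_sum]
      refine Finset.sum_congr rfl (fun q _ => ?_)
      simp only [hc, pow_zero, mul_one]
      ring
    rw [← hcoeff]
    exact hcomb
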